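/- For a cooperative game with a convex (supermodular) characteristic function u, i.e., u(C∪D) + u(C∩D) ≥ u(C) + u(D) for all coalitions C, D, the core is nonempty; consequently the maximum excess at the nucleolus is at most zero. -/

import Mathlib

open Finset

variable {N : Type*} [Fintype N] [DecidableEq N]

noncomputable def excess (u : Finset N → ℝ) (x : N → ℝ) (C : Finset N) : ℝ :=
  u C - ∑ i ∈ C, x i

noncomputable def theta (u : Finset N → ℝ) (x : N → ℝ) : List ℝ :=
  ((Finset.univ.powerset.val.map (excess u x)).sort (· ≤ ·)).reverse

def lexLe (a b : List ℝ) : Prop := a = b ∨ List.Lex (· < ·) a b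

lemma mem_theta_iff (u : Finset N → ℝ) (x : N → ℝ) (a : ℝ) :
    a ∈ theta u x ↔ ∃ C : Finset N, excess u x C = a := by
  simp only [theta, List.mem_reverse, Multiset.mem_sort, Multiset.mem_map]
  constructor
  · rintro ⟨C, -, h⟩; exact ⟨C, h⟩
  · rintro ⟨C, h⟩; exact ⟨C, by simp [Finset.mem_powerset], h⟩

lemma theta_sorted (u : Finset N → ℝ) (x : N → ℝ) :
    (theta u x).Pairwise (· ≥ ·) := by
  have := Multiset.pairwise_sort (r := (· ≤ ·)) (s := Finset.univ.powerset.val.map (excess u x))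
  exact List.pairwise_reverse.mpr this

lemma theta_ne_nil (u : Finset N → ℝ) (x : N → ℝ) : theta u x ≠ [] := by
  have hlen : (theta u x).length = 2 ^ Fintype.card N := by
    simp [theta, Multiset.length_sort, Multiset.card_map]
  intro h
  rw [h] at hlen
  simp at hlen
  exact (pow_ne_zero _ (by norm_num : (2:ℕ) ≠ 0) hlen.symm).elim

/-- For a convex (supermodular) characteristic function the core is nonempty;
consequently the maximum excess at the nucleolus (any lexicographic minimizer of the
sorted excess vector over efficient payoffs) is at most zero. -/
theorem supermodular_core_nonempty_and_nucleolus_max_excess_nonpos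
    (u : Finset N → ℝ) (hu : u ∅ = 0)
    (hsuper : ∀ C D : Finset N, u C + u D ≤ u (C ∪ D) + u (C ∩ D)) :
    (∃ x : N → ℝ, (∑ i, x i = u Finset.univ) ∧
      ∀ C : Finset N, u C ≤ ∑ i ∈ C, x i) ∧
    (∀ x : N → ℝ, (∑ i, x i = u Finset.univ) →
      (∀ y : N → ℝ, (∑ i, y i = u Finset.univ) → lexLe (theta u x) (theta u y)) →
      Finset.univ.powerset.sup' ⟨∅, empty_mem_powerset _⟩ (excess u x) ≤ 0) := by
  -- Part 1: core nonempty via marginal vector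
  classical
  set n := Fintype.card N with hn
  set e : N ≃ Fin n := Fintype.equivFin N with he
  set S : ℕ → Finset N := fun k => univ.filter (fun j => ((e j : ℕ) < k)) with hS
  set x : N → ℝ := fun i => u (S ((e i : ℕ) + 1)) - u (S (e i : ℕ)) with hx
  have hS0 : S 0 = ∅ := by simp [hS]
  have hSn : ∀ k, n ≤ k → S k = univ := by
    intro k hk; ext j; simp [hS]; exact lt_of_lt_of_le (e j).isLt hk
  have hSstep : ∀ k (hk : k < n), S (k + 1) = insert (e.symm ⟨k, hk⟩) (S k) ∧
      e.symm ⟨k, hk⟩ ∉ S k := by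
    intro k hk
    constructor
    · ext j
      simp only [hS, mem_filter, mem_univ, true_and, mem_insert]
      constructor
      · intro h
        rcases Nat.lt_succ_iff_lt_or_eq.mp h with h | h
        · exact Or.inr h
        · left
          have : e j = ⟨k, hk⟩ := Fin.ext h
          simp [← this]
      · rintro (h | h)
        · subst h; simp [Nat.lt_succ_iff]
        · exact Nat.lt_succ_of_lt h
    · simp [hS]
  -- telescoping sum
  have hsum : ∑ i, x i = u univ := by
    have : ∑ i, x i = ∑ m : Fin n, (u (S ((m : ℕ) + 1)) - u (S (m : ℕ))) := by
      apply Fintype.sum_equiv e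
      intro i; rfl
    rw [this, Fin.sum_univ_eq_sum_range (fun k => u (S (k + 1)) - u (S k)) n,
      Finset.sum_range_sub (fun k => u (S k)) n, hS0, hu, hSn n le_rfl, sub_zero]
  -- core inequalities
  have hcore : ∀ C : Finset N, u C ≤ ∑ i ∈ C, x i := by
    intro C
    have key : ∀ k, u (C ∩ S k) ≤ ∑ i ∈ C ∩ S k, x i := by
      intro k
      induction k with
      | zero => simp [hS0, hu]
      | succ k ih =>
        by_cases hk : k < n
        · obtain ⟨hins, hnot⟩ := hSstep k hk
          set j := e.symm ⟨k, hk⟩ with hj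
          by_cases hjC : j ∈ C
          · have h1 : C ∩ S (k + 1) = insert j (C ∩ S k) := by
              rw [hins, Finset.inter_insert_of_mem hjC]
            have hjnot : j ∉ C ∩ S k := fun h => hnot (Finset.mem_inter.mp h).2
            rw [h1, Finset.sum_insert hjnot]
            have hxj : x j = u (S (k + 1)) - u (S k) := by
              have : (e j : ℕ) = k := by simp [hj]
              simp [hx, this]
            have hsup := hsuper (insert j (C ∩ S k)) (S k)
            have hU : insert j (C ∩ S k) ∪ S k = S (k + 1) := by
              rw [hins]
              rw [Finset.insert_union]
              congr 1
              exact Finset.union_eq_right.mpr (Finset.inter_subset_right)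
            have hI : insert j (C ∩ S k) ∩ S k = C ∩ S k := by
              rw [Finset.insert_inter_of_notMem hnot, Finset.inter_assoc, Finset.inter_self]
            rw [hU, hI] at hsup
            linarith
          · have h1 : C ∩ S (k + 1) = C ∩ S k := by
              rw [hins, Finset.inter_insert_of_notMem hjC]
            rw [h1]; exact ih
        · have : S (k + 1) = S k := by
            rw [hSn k (le_of_not_gt hk), hSn (k + 1) (le_trans (le_of_not_gt hk) (Nat.le_succ k))]
          rw [this]; exact ih
    have := key n
    rwa [hSn n le_rfl, Finset.inter_univ] at this
  refine ⟨⟨x, hsum, hcore⟩, ?_⟩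
  -- Part 2
  intro z hz hmin
  have hlex := hmin x hsum
  set M := Finset.univ.powerset.sup' ⟨∅, empty_mem_powerset _⟩ (excess u z) with hM
  obtain ⟨C, -, hC⟩ := Finset.exists_mem_eq_sup' (⟨∅, empty_mem_powerset _⟩ :
    (univ : Finset N).powerset.Nonempty) (excess u z)
  have hMmem : M ∈ theta u z := (mem_theta_iff u z M).mpr ⟨C, hC.symm⟩
  obtain ⟨a, ta, hax⟩ := List.exists_cons_of_ne_nil (theta_ne_nil u z)
  obtain ⟨b, tb, hby⟩ := List.exists_cons_of_ne_nil (theta_ne_nil u x)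
  -- M ≤ a
  have hMa : M ≤ a := by
    rw [hax] at hMmem
    rcases List.mem_cons.mp hMmem with h | h
    · exact le_of_eq h
    · have hs := theta_sorted u z
      rw [hax] at hs
      exact List.rel_of_pairwise_cons hs h
  -- a ≤ b
  have hab : a ≤ b := by
    rcases hlex with h | h
    · rw [hax, hby] at h; exact le_of_eq (by injection h)
    · rw [hax, hby] at h
      cases h with
      | cons h => exact le_refl _
      | rel h => exact le_of_lt h
  -- b ≤ 0
  have hb0 : b ≤ 0 := by
    have : b ∈ theta u x := by rw [hby]; exact List.mem_cons_self
    obtain ⟨D, hD⟩ := (mem_theta_iff u x b).mp this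
    rw [← hD]
    simp only [excess, sub_nonpos]
    exact hcore D
  linarith
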